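/- Let K ∈ ℝ^{V×V} be a rate constant matrix on a finite set V with positive stationary vector π, let S ⊆ V with T = V \ S, and suppose K_{SS} is invertible. Then the Schur complement K' = K_{TT} − K_{TS} K_{SS}^{-1} K_{ST} is a rate constant matrix on T; moreover, the restriction π_T of π to T is a stationary vector for K', i.e., K'_{uv} π_v = K'_{vu} π_u for all u, v ∈ T. -/

import Mathlib

open Matrix BigOperators

/-- The Schur complement of `S` in `A`, as a matrix indexed by the complement of `S`. -/
noncomputable def schurCompl {V : Type*} [Fintype V] [DecidableEq V]
    (A : Matrix V V ℝ) (S : Finset V) : Matrix ↥Sᶜ ↥Sᶜ ℝ :=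
  A.submatrix (fun a : ↥Sᶜ => (a : V)) (fun a : ↥Sᶜ => (a : V))
    - A.submatrix (fun a : ↥Sᶜ => (a : V)) (fun a : ↥S => (a : V))
      * (A.submatrix (fun a : ↥S => (a : V)) (fun a : ↥S => (a : V)))⁻¹
      * A.submatrix (fun a : ↥S => (a : V)) (fun a : ↥Sᶜ => (a : V))


lemma psd_of_dom {ι : Type*} [Fintype ι] [DecidableEq ι] (G : Matrix ι ι ℝ)
    (hsym : ∀ u v, G u v = G v u)
    (hoff : ∀ u v, u ≠ v → G u v ≤ 0)
    (hdom : ∀ v, 0 ≤ ∑ u, G u v) :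
    G.PosSemidef := by
  set c : ι → ι → ℝ := fun u v => if u = v then 0 else -G u v with hc
  have hc_nonneg : ∀ u v, 0 ≤ c u v := by
    intro u v; simp only [hc]
    split
    · exact le_refl 0
    · next h => linarith [hoff u v h]
  have hc_symm : ∀ u v, c u v = c v u := by
    intro u v; simp only [hc]
    rcases eq_or_ne u v with rfl | h
    · simp
    · simp [h, Ne.symm h, hsym u v]
  have hdiag : ∀ v, ∑ u, c u v ≤ G v v := by
    intro v
    have key : ∑ u, (G u v + c u v) = G v v := by
      have : ∀ u ∈ Finset.univ, G u v + c u v = if u = v then G v v else 0 := by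
        intro u _
        simp only [hc]
        rcases eq_or_ne u v with rfl | h
        · simp
        · simp [h]
      rw [Finset.sum_congr rfl this, Finset.sum_ite_eq' Finset.univ v (fun _ => G v v)]
      simp
    have := hdom v
    rw [Finset.sum_add_distrib] at key
    linarith
  refine Matrix.posSemidef_iff_dotProduct_mulVec.mpr ⟨?_, ?_⟩
  · ext u v; simp [Matrix.conjTranspose_apply, hsym u v]
  · intro x
    rw [star_trivial]
    have hQ : dotProduct x (G *ᵥ x) = ∑ u, ∑ v, x u * G u v * x v := by
      simp [dotProduct, mulVec, Finset.mul_sum, mul_assoc]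
    rw [hQ]
    have hQ2 : ∑ u, ∑ v, x u * G u v * x v
        = ∑ u, G u u * x u ^ 2 - ∑ u, ∑ v, x u * c u v * x v := by
      rw [← Finset.sum_sub_distrib]
      refine Finset.sum_congr rfl fun u _ => ?_
      have expand : ∀ v ∈ Finset.univ, x u * G u v * x v
          = (if v = u then G u u * x u ^ 2 else 0) - x u * c u v * x v := by
        intro v _
        simp only [hc]
        rcases eq_or_ne u v with rfl | h
        · rw [if_pos rfl, if_pos rfl]; ring
        · rw [if_neg (Ne.symm h), if_neg h]; ring
      rw [Finset.sum_congr rfl expand, Finset.sum_sub_distrib,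
        Finset.sum_ite_eq' Finset.univ u (fun _ => G u u * x u ^ 2)]
      simp
    rw [hQ2]
    have h1 : ∑ u, (∑ w, c w u) * x u ^ 2 ≤ ∑ u, G u u * x u ^ 2 :=
      Finset.sum_le_sum fun u _ => mul_le_mul_of_nonneg_right (hdiag u) (sq_nonneg _)
    have h2 : ∑ u, (∑ w, c w u) * x u ^ 2 = ∑ u, ∑ v, c u v * x v ^ 2 := by
      rw [Finset.sum_comm]
      exact Finset.sum_congr rfl fun u _ => by rw [Finset.sum_mul]
    have hswap : ∑ u, ∑ v, c u v * x v ^ 2 = ∑ u, ∑ v, c u v * x u ^ 2 := by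
      rw [Finset.sum_comm]
      exact Finset.sum_congr rfl fun u _ => Finset.sum_congr rfl fun v _ => by
        rw [hc_symm]
    have hN : (0:ℝ) ≤ ∑ u, ∑ v, c u v * (x u - x v) ^ 2 :=
      Finset.sum_nonneg fun u _ => Finset.sum_nonneg fun v _ =>
        mul_nonneg (hc_nonneg u v) (sq_nonneg _)
    have e1 : ∑ u, ∑ v, c u v * (x u - x v) ^ 2
        = ∑ u, ∑ v, c u v * x u ^ 2 + ∑ u, ∑ v, c u v * x v ^ 2
          - 2 * ∑ u, ∑ v, x u * c u v * x v := by
      simp only [Finset.mul_sum, ← Finset.sum_add_distrib, ← Finset.sum_sub_distrib]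
      exact Finset.sum_congr rfl fun u _ => Finset.sum_congr rfl fun v _ => by ring
    rw [← hswap] at e1
    linarith

lemma quad_pos_of_psd_det {ι : Type*} [Fintype ι] [DecidableEq ι] (G : Matrix ι ι ℝ)
    (hpsd : G.PosSemidef) (hdet : G.det ≠ 0) {x : ι → ℝ} (hx : x ≠ 0) :
    0 < dotProduct x (G *ᵥ x) := by
  have h0 : 0 ≤ dotProduct x (G *ᵥ x) := by
    have := hpsd.dotProduct_mulVec_nonneg x
    rwa [star_trivial] at this
  rcases h0.lt_or_eq with h | h
  · exact h
  · exfalso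
    have hz : G *ᵥ x = 0 := by
      have := (hpsd.dotProduct_mulVec_zero_iff x)
      rw [star_trivial] at this
      exact this.mp h.symm
    exact hdet (Matrix.exists_mulVec_eq_zero_iff.mp ⟨x, hx, hz⟩)

lemma inv_entry_nonneg {ι : Type*} [Fintype ι] [DecidableEq ι] (G : Matrix ι ι ℝ)
    (hpsd : G.PosSemidef) (hdet : G.det ≠ 0)
    (hoff : ∀ u v, u ≠ v → G u v ≤ 0) : ∀ i j, 0 ≤ G⁻¹ i j := by
  intro i j
  by_contra hneg
  push_neg at hneg
  set x : ι → ℝ := fun k => G⁻¹ k j with hxdef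
  set xm : ι → ℝ := fun k => max (-(x k)) 0 with hxm
  set xp : ι → ℝ := fun k => max (x k) 0 with hxp
  have hxm_nonneg : ∀ k, 0 ≤ xm k := fun k => le_max_right _ _
  have hxp_nonneg : ∀ k, 0 ≤ xp k := fun k => le_max_right _ _
  have hprod : ∀ k, xm k * xp k = 0 := by
    intro k
    rcases le_total 0 (x k) with h | h
    · simp [hxm, max_eq_right (neg_nonpos_of_nonneg h)]
    · simp [hxp, max_eq_right h]
  have hxm_eq : xm = xp - x := by
    funext k
    simp only [hxm, hxp, Pi.sub_apply]
    rcases le_total 0 (x k) with h | h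
    · rw [max_eq_right (neg_nonpos_of_nonneg h), max_eq_left h]; ring
    · rw [max_eq_left (neg_nonneg_of_nonpos h), max_eq_right h]; ring
  have hGx : G *ᵥ x = fun k => (1 : Matrix ι ι ℝ) k j := by
    funext k
    show ∑ l, G k l * G⁻¹ l j = _
    rw [← Matrix.mul_apply, Matrix.mul_nonsing_inv G (isUnit_iff_ne_zero.mpr hdet)]
  have hA : dotProduct xm (G *ᵥ xp) ≤ 0 := by
    refine Finset.sum_nonpos fun k _ => ?_
    show xm k * (∑ l, G k l * xp l) ≤ 0
    rw [Finset.mul_sum]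
    refine Finset.sum_nonpos fun l _ => ?_
    rcases eq_or_ne k l with rfl | h
    · have : xm k * (G k k * xp k) = G k k * (xm k * xp k) := by ring
      rw [this, hprod k, mul_zero]
    · have h1 : G k l * xp l ≤ 0 := mul_nonpos_iff.mpr (Or.inr ⟨hoff k l h, hxp_nonneg l⟩)
      exact mul_nonpos_iff.mpr (Or.inl ⟨hxm_nonneg k, h1⟩)
  have hB : dotProduct xm (G *ᵥ x) = xm j := by
    rw [hGx]
    simp [dotProduct, Matrix.one_apply]
  have hxmj : 0 ≤ xm j := hxm_nonneg j
  have hq : dotProduct xm (G *ᵥ xm) ≤ 0 := by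
    have hs : G *ᵥ xm = G *ᵥ xp - G *ᵥ x := by rw [hxm_eq, Matrix.mulVec_sub]
    rw [hs, dotProduct_sub, hB]
    linarith
  have hxmne : xm ≠ 0 := by
    intro h0
    have h1 : xm i = 0 := congrFun h0 i
    have h2 : -(x i) ≤ xm i := le_max_left _ _
    have h3 : 0 < -(x i) := by
      simp only [hxdef]
      linarith
    linarith
  have := quad_pos_of_psd_det G hpsd hdet hxmne
  linarith

/-- The Schur complement of a rate constant matrix is again a rate constant matrix,
with the restriction of the stationary vector as a stationary vector. -/
theorem schur_complement_of_rate_constant_matrix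
    {V : Type*} [Fintype V] [DecidableEq V]
    (K : Matrix V V ℝ) (p : V → ℝ)
    (hp : ∀ v : V, 0 < p v)
    (hRCM1 : ∀ u v : V, u ≠ v → 0 ≤ K u v)
    (hRCM2 : ∀ v : V, K v v = -∑ u ∈ Finset.univ.erase v, K u v)
    (hRCM3 : ∀ u v : V, K u v * p v = K v u * p u)
    (S : Finset V)
    (hinv : IsUnit (K.submatrix (fun a : ↥S => (a : V)) (fun a : ↥S => (a : V))).det) :
    (∀ u v : ↥Sᶜ, u ≠ v → 0 ≤ schurCompl K S u v)
    ∧ (∀ v : ↥Sᶜ, schurCompl K S v v = -∑ u ∈ Finset.univ.erase v, schurCompl K S u v)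
    ∧ (∀ u v : ↥Sᶜ, schurCompl K S u v * p v = schurCompl K S v u * p u) := by
  classical
  set A := K.submatrix (fun a : ↥S => (a : V)) (fun a : ↥S => (a : V)) with hA
  set B := K.submatrix (fun a : ↥S => (a : V)) (fun a : ↥Sᶜ => (a : V)) with hB
  set C := K.submatrix (fun a : ↥Sᶜ => (a : V)) (fun a : ↥S => (a : V)) with hC
  set D := K.submatrix (fun a : ↥Sᶜ => (a : V)) (fun a : ↥Sᶜ => (a : V)) with hD
  have hSC : schurCompl K S = D - C * A⁻¹ * B := rfl
  have hne_TS : ∀ (u : ↥Sᶜ) (v : ↥S), (u : V) ≠ (v : V) :=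
    fun u v h => (Finset.mem_compl.mp u.2) (h ▸ v.2)
  have hne_ST : ∀ (u : ↥S) (v : ↥Sᶜ), (u : V) ≠ (v : V) :=
    fun u v h => (Finset.mem_compl.mp v.2) (h ▸ u.2)
  have hcol : ∀ v : V, ∑ u : V, K u v = 0 := by
    intro v
    have h1 := hRCM2 v
    have h2 : K v v + ∑ u ∈ Finset.univ.erase v, K u v = ∑ u : V, K u v :=
      Finset.add_sum_erase Finset.univ (fun u => K u v) (Finset.mem_univ v)
    linarith
  have hsplit : ∀ f : V → ℝ, ∑ u : ↥S, f ↑u + ∑ u : ↥Sᶜ, f ↑u = ∑ u : V, f u := by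
    intro f
    rw [Finset.sum_coe_sort, Finset.sum_coe_sort]
    exact Finset.sum_add_sum_compl S f
  have hcolS : ∀ v : ↥S, ∑ u : ↥Sᶜ, K ↑u ↑v = -∑ u : ↥S, K ↑u ↑v := by
    intro v
    have h1 := hsplit (fun u => K u ↑v)
    have h2 := hcol ↑v
    beta_reduce at h1
    linarith
  have hcolT : ∀ v : ↥Sᶜ, ∑ u : ↥Sᶜ, K ↑u ↑v = -∑ u : ↥S, K ↑u ↑v := by
    intro v
    have h1 := hsplit (fun u => K u ↑v)
    have h2 := hcol ↑v
    beta_reduce at h1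
    linarith
  -- the symmetrized matrix G
  set G : Matrix ↥S ↥S ℝ := fun u v => -(K ↑u ↑v * p ↑v) with hG
  have hGsym : ∀ u v : ↥S, G u v = G v u := by
    intro u v; simp only [hG]; rw [hRCM3 ↑u ↑v]
  have hGoff : ∀ u v : ↥S, u ≠ v → G u v ≤ 0 := by
    intro u v huv
    have : (u : V) ≠ (v : V) := fun h => huv (Subtype.ext h)
    simp only [hG, neg_nonpos]
    exact mul_nonneg (hRCM1 _ _ this) (hp _).le
  have hGdom : ∀ v : ↥S, 0 ≤ ∑ u : ↥S, G u v := by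
    intro v
    have h1 : ∑ u : ↥S, G u v = -((∑ u : ↥S, K ↑u ↑v) * p ↑v) := by
      simp only [hG, ← Finset.sum_neg_distrib, Finset.sum_mul, neg_mul]
    rw [h1]
    have h2 : (0:ℝ) ≤ ∑ u : ↥Sᶜ, K ↑u ↑v :=
      Finset.sum_nonneg fun u _ => hRCM1 _ _ (hne_TS u v)
    have h3 : ∑ u : ↥S, K ↑u ↑v ≤ 0 := by
      have := hcolS v; linarith
    nlinarith [hp (↑v : V)]
  set Dp : Matrix ↥S ↥S ℝ := Matrix.diagonal (fun v : ↥S => p ↑v) with hDp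
  have hGA : G = (-A) * Dp := by
    ext u v
    simp [hG, hDp, hA, Matrix.mul_diagonal, Matrix.submatrix_apply, mul_comm]
  have hdetA : A.det ≠ 0 := hinv.ne_zero
  have hGdet : G.det ≠ 0 := by
    rw [hGA, Matrix.det_mul, Matrix.det_neg, Matrix.det_diagonal]
    refine mul_ne_zero (mul_ne_zero ?_ hdetA) ?_
    · exact pow_ne_zero _ (by norm_num)
    · exact Finset.prod_ne_zero_iff.mpr fun v _ => (hp ↑v).ne'
  have hpsd := psd_of_dom G hGsym hGoff hGdom
  have hGinv := inv_entry_nonneg G hpsd hGdet hGoff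
  have hAinv : A⁻¹ = -(Dp * G⁻¹) := by
    apply Matrix.inv_eq_right_inv
    have h1 : A * -(Dp * G⁻¹) = ((-A) * Dp) * G⁻¹ := by
      rw [Matrix.mul_neg, ← Matrix.mul_assoc, ← Matrix.neg_mul, Matrix.neg_mul A Dp]
    rw [h1, ← hGA, Matrix.mul_nonsing_inv G (isUnit_iff_ne_zero.mpr hGdet)]
  have hAinv_nonpos : ∀ s t : ↥S, A⁻¹ s t ≤ 0 := by
    intro s t
    rw [hAinv]
    have : (Dp * G⁻¹) s t = p ↑s * G⁻¹ s t := by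
      simp [hDp, Matrix.diagonal_mul]
    simp only [Matrix.neg_apply, this, neg_nonpos]
    exact mul_nonneg (hp _).le (hGinv s t)
  have hAunit := hinv
  have hA1 : A * A⁻¹ = 1 := Matrix.mul_nonsing_inv A hAunit
  have hA2 : A⁻¹ * A = 1 := Matrix.nonsing_inv_mul A hAunit
  -- Claim 1 : off-diagonal entries nonnegative
  have claim1 : ∀ u v : ↥Sᶜ, u ≠ v → 0 ≤ schurCompl K S u v := by
    intro u v huv
    rw [hSC, Matrix.sub_apply]
    have hD0 : 0 ≤ D u v := hRCM1 _ _ (fun h => huv (Subtype.ext h))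
    have hM0 : (C * A⁻¹ * B) u v ≤ 0 := by
      rw [Matrix.mul_apply]
      refine Finset.sum_nonpos fun t _ => ?_
      have h1 : (C * A⁻¹) u t ≤ 0 := by
        rw [Matrix.mul_apply]
        refine Finset.sum_nonpos fun s _ => ?_
        exact mul_nonpos_iff.mpr (Or.inl ⟨hRCM1 _ _ (hne_TS u s), hAinv_nonpos s t⟩)
      exact mul_nonpos_iff.mpr (Or.inr ⟨h1, hRCM1 _ _ (hne_ST t v)⟩)
    linarith
  -- Column sums of the Schur complement vanish
  have hCA : ∀ t : ↥S, ∑ u : ↥Sᶜ, (C * A⁻¹) u t = -1 := by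
    intro t
    have e1 : ∑ u : ↥Sᶜ, (C * A⁻¹) u t
        = ∑ s : ↥S, (∑ u : ↥Sᶜ, C u s) * A⁻¹ s t := by
      simp only [Matrix.mul_apply]
      rw [Finset.sum_comm]
      exact Finset.sum_congr rfl fun s _ => by rw [Finset.sum_mul]
    have e2 : ∀ s : ↥S, ∑ u : ↥Sᶜ, C u s = -∑ w : ↥S, A w s := by
      intro s
      simpa [hC, hA, Matrix.submatrix_apply] using hcolS s
    rw [e1, Finset.sum_congr rfl fun s _ => by rw [e2 s]]
    have e3 : ∑ s : ↥S, (-∑ w : ↥S, A w s) * A⁻¹ s t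
        = -∑ w : ↥S, (A * A⁻¹) w t := by
      simp only [Matrix.mul_apply, neg_mul, Finset.sum_neg_distrib, Finset.sum_mul]
      rw [Finset.sum_comm]
    rw [e3, hA1]
    simp [Matrix.one_apply]
  have hcol' : ∀ v : ↥Sᶜ, ∑ u : ↥Sᶜ, schurCompl K S u v = 0 := by
    intro v
    have e1 : ∑ u : ↥Sᶜ, schurCompl K S u v
        = ∑ u : ↥Sᶜ, D u v - ∑ u : ↥Sᶜ, (C * A⁻¹ * B) u v := by
      rw [← Finset.sum_sub_distrib]
      exact Finset.sum_congr rfl fun u _ => by rw [hSC, Matrix.sub_apply]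
    have e2 : ∑ u : ↥Sᶜ, (C * A⁻¹ * B) u v = -∑ t : ↥S, B t v := by
      have : ∑ u : ↥Sᶜ, (C * A⁻¹ * B) u v
          = ∑ t : ↥S, (∑ u : ↥Sᶜ, (C * A⁻¹) u t) * B t v := by
        simp only [Matrix.mul_apply]
        rw [Finset.sum_comm]
        exact Finset.sum_congr rfl fun t _ => by rw [Finset.sum_mul]
      rw [this, Finset.sum_congr rfl fun t _ => by rw [hCA t]]
      simp [Finset.sum_neg_distrib]
    have e3 : ∑ u : ↥Sᶜ, D u v = -∑ t : ↥S, B t v := by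
      simpa [hD, hB, Matrix.submatrix_apply] using hcolT v
    rw [e1, e2, e3]
    ring
  have claim2 : ∀ v : ↥Sᶜ, schurCompl K S v v
      = -∑ u ∈ Finset.univ.erase v, schurCompl K S u v := by
    intro v
    have h1 : schurCompl K S v v + ∑ u ∈ Finset.univ.erase v, schurCompl K S u v
        = ∑ u : ↥Sᶜ, schurCompl K S u v :=
      Finset.add_sum_erase Finset.univ (fun u => schurCompl K S u v) (Finset.mem_univ v)
    have h2 := hcol' v
    linarith
  -- Claim 3 : detailed balance
  have claim3 : ∀ u v : ↥Sᶜ, schurCompl K S u v * p ↑v = schurCompl K S v u * p ↑u := by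
   set PT : Matrix ↥Sᶜ ↥Sᶜ ℝ := Matrix.diagonal (fun v : ↥Sᶜ => p ↑v) with hPT
   have hAT1 : Aᵀ * (Aᵀ)⁻¹ = 1 :=
     Matrix.mul_nonsing_inv Aᵀ (by rwa [Matrix.det_transpose])
   have hAPS : A * Dp = Dp * Aᵀ := by
     ext s t
     simp only [hA, hDp, Matrix.mul_diagonal, Matrix.diagonal_mul, Matrix.transpose_apply,
       Matrix.submatrix_apply]
     rw [hRCM3 ↑s ↑t]
     ring
   have hBPT : B * PT = Dp * Cᵀ := by
     ext s t
     simp only [hB, hC, hPT, hDp, Matrix.mul_diagonal, Matrix.diagonal_mul,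
       Matrix.transpose_apply, Matrix.submatrix_apply]
     rw [hRCM3 ↑s ↑t]
     ring
   have hDPT : D * PT = PT * Dᵀ := by
     ext s t
     simp only [hD, hPT, Matrix.mul_diagonal, Matrix.diagonal_mul, Matrix.transpose_apply,
       Matrix.submatrix_apply]
     rw [hRCM3 ↑s ↑t]
     ring
   have hAinvP : A⁻¹ * Dp = Dp * (Aᵀ)⁻¹ := by
     calc A⁻¹ * Dp = A⁻¹ * Dp * (Aᵀ * (Aᵀ)⁻¹) := by rw [hAT1, Matrix.mul_one]
     _ = A⁻¹ * (Dp * Aᵀ) * (Aᵀ)⁻¹ := by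
         simp only [Matrix.mul_assoc]
     _ = A⁻¹ * (A * Dp) * (Aᵀ)⁻¹ := by rw [hAPS]
     _ = Dp * (Aᵀ)⁻¹ := by rw [← Matrix.mul_assoc, hA2, Matrix.one_mul]
   have hM : (C * A⁻¹ * B) * PT = PT * (C * A⁻¹ * B)ᵀ := by
     have hPTB : PT * Bᵀ = C * Dp := by
       have := congrArg Matrix.transpose hBPT
       rwa [Matrix.transpose_mul, Matrix.transpose_mul, Matrix.transpose_transpose,
         Matrix.diagonal_transpose, Matrix.diagonal_transpose] at this
     calc (C * A⁻¹ * B) * PT = C * (A⁻¹ * Dp) * Cᵀ := by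
           rw [Matrix.mul_assoc (C * A⁻¹) B PT, hBPT, Matrix.mul_assoc C A⁻¹ _,
             ← Matrix.mul_assoc A⁻¹ Dp Cᵀ, ← Matrix.mul_assoc C (A⁻¹ * Dp) Cᵀ]
     _ = C * Dp * ((Aᵀ)⁻¹ * Cᵀ) := by
           rw [hAinvP, ← Matrix.mul_assoc, ← Matrix.mul_assoc]
     _ = PT * (C * A⁻¹ * B)ᵀ := by
           rw [← hPTB, Matrix.transpose_mul, Matrix.transpose_mul,
             Matrix.transpose_nonsing_inv]
           simp only [Matrix.mul_assoc]
   have hfull : schurCompl K S * PT = PT * (schurCompl K S)ᵀ := by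
     rw [hSC, Matrix.sub_mul, Matrix.transpose_sub, Matrix.mul_sub, hDPT, hM]
   intro u v
   have h1 := congrFun (congrFun hfull u) v
   have h2 : (schurCompl K S * PT) u v = schurCompl K S u v * p ↑v := by
     simp [hPT, Matrix.mul_diagonal]
   have h3 : (PT * (schurCompl K S)ᵀ) u v = p ↑u * schurCompl K S v u := by
     simp [hPT, Matrix.diagonal_mul]
   rw [h2, h3] at h1
   rw [h1]
   ring
  exact ⟨claim1, claim2, claim3⟩
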